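/- (ISS bound of Theorem 1.) Let x : [0,∞) → ℝ^N be a differentiable curve and e : [0,∞) → ℝ^m a continuous curve satisfying x'(t) = A x(t) + B e(t) for all t ≥ 0, where A is an N×N real matrix and B an N×m real matrix. Suppose P and Q are symmetric positive definite N×N real matrices with Aᵀ P + P A = −Q, let λ_min(P), λ_max(P) be the smallest and largest eigenvalues of P and λ_min(Q) the smallest eigenvalue of Q, and suppose ‖e(t)‖ ≤ E for all t ≥ 0 for some constant E ≥ 0. Then for all t ≥ 0, ‖x(t)‖² ≤ (λ_max(P)/λ_min(P)) · exp( −λ_min(Q) t / (2 λ_max(P)) ) · ‖x(0)‖² + (4 λ_max(P) ‖Bᵀ Pᵀ P B‖ / (λ_min(P) λ_min(Q)²)) · E². In particular the system ẋ = A x + B e is input-to-state stable with respect to the measurement error e. -/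

import Mathlib

open Matrix
open scoped RealInnerProductSpace

/-- Multiplication of a vector in Euclidean space by a real matrix. -/
noncomputable def matVec {a b : ℕ} (M : Matrix (Fin a) (Fin b) ℝ)
    (v : EuclideanSpace ℝ (Fin b)) : EuclideanSpace ℝ (Fin a) :=
  Matrix.toEuclideanLin M v

/-- The operator norm of a real matrix, induced by the Euclidean norms. -/
noncomputable def opNorm {a b : ℕ} (M : Matrix (Fin a) (Fin b) ℝ) : ℝ :=
  ‖LinearMap.toContinuousLinearMap (Matrix.toEuclideanLin M)‖

lemma matVec_mul {a b c : ℕ} (M : Matrix (Fin a) (Fin b) ℝ) (N : Matrix (Fin b) (Fin c) ℝ)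
    (v : EuclideanSpace ℝ (Fin c)) : matVec (M * N) v = matVec M (matVec N v) := by
  simp [matVec, Matrix.toEuclideanLin_apply, Matrix.mulVec_mulVec]

lemma matVec_add_mat {a b : ℕ} (M N : Matrix (Fin a) (Fin b) ℝ)
    (v : EuclideanSpace ℝ (Fin b)) : matVec (M + N) v = matVec M v + matVec N v := by
  simp [matVec, map_add]

lemma matVec_neg_mat {a b : ℕ} (M : Matrix (Fin a) (Fin b) ℝ)
    (v : EuclideanSpace ℝ (Fin b)) : matVec (-M) v = -(matVec M v) := by
  simp [matVec, map_neg]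

lemma matVec_add_vec {a b : ℕ} (M : Matrix (Fin a) (Fin b) ℝ)
    (v w : EuclideanSpace ℝ (Fin b)) : matVec M (v + w) = matVec M v + matVec M w := by
  simp [matVec, map_add]

lemma inner_matVec_left {a b : ℕ} (M : Matrix (Fin a) (Fin b) ℝ)
    (v : EuclideanSpace ℝ (Fin b)) (w : EuclideanSpace ℝ (Fin a)) :
    ⟪matVec M v, w⟫ = ⟪v, matVec Mᵀ w⟫ := by
  have h : (Mᵀ : Matrix (Fin b) (Fin a) ℝ) = Mᴴ := (Matrix.conjTranspose_eq_transpose_of_trivial M).symm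
  rw [matVec, matVec, h, Matrix.toEuclideanLin_conjTranspose_eq_adjoint,
    LinearMap.adjoint_inner_right]

lemma matVec_eigen {n : ℕ} {S : Matrix (Fin n) (Fin n) ℝ} (hS : S.IsHermitian) (i : Fin n) :
    matVec S (hS.eigenvectorBasis i) = hS.eigenvalues i • hS.eigenvectorBasis i := by
  apply (WithLp.equiv 2 (Fin n → ℝ)).injective
  simp only [matVec, WithLp.equiv_apply, Matrix.ofLp_toEuclideanLin_apply]
  simpa using hS.mulVec_eigenvectorBasis i

lemma quad_eq {n : ℕ} {S : Matrix (Fin n) (Fin n) ℝ} (hS : S.IsHermitian)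
    (v : EuclideanSpace ℝ (Fin n)) :
    ⟪v, matVec S v⟫ = ∑ i, hS.eigenvalues i * (hS.eigenvectorBasis.repr v i) ^ 2 := by
  set b := hS.eigenvectorBasis
  have hST : Sᵀ = S := by
    have := hS.eq
    rwa [Matrix.conjTranspose_eq_transpose_of_trivial] at this
  have h1 : ∀ i, b.repr (matVec S v) i = hS.eigenvalues i * b.repr v i := by
    intro i
    rw [OrthonormalBasis.repr_apply_apply, OrthonormalBasis.repr_apply_apply]
    have h2 : ⟪b i, matVec S v⟫ = ⟪matVec S (b i), v⟫ := by
      rw [inner_matVec_left, hST]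
    rw [h2, matVec_eigen hS i, real_inner_smul_left]
  rw [← b.repr.inner_map_map v (matVec S v)]
  rw [PiLp.inner_apply]
  refine Finset.sum_congr rfl fun i _ => ?_
  rw [h1 i]
  simp [RCLike.inner_apply]
  ring

lemma norm_sq_eq_sum {n : ℕ} {S : Matrix (Fin n) (Fin n) ℝ} (hS : S.IsHermitian)
    (v : EuclideanSpace ℝ (Fin n)) :
    ‖v‖ ^ 2 = ∑ i, (hS.eigenvectorBasis.repr v i) ^ 2 := by
  rw [← real_inner_self_eq_norm_sq, ← hS.eigenvectorBasis.repr.inner_map_map v v,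
    PiLp.inner_apply]
  refine Finset.sum_congr rfl fun i _ => ?_
  simp [RCLike.inner_apply, sq]

lemma quad_lower {n : ℕ} {S : Matrix (Fin n) (Fin n) ℝ} (hS : S.IsHermitian)
    {c : ℝ} (hc : ∀ i, c ≤ hS.eigenvalues i) (v : EuclideanSpace ℝ (Fin n)) :
    c * ‖v‖ ^ 2 ≤ ⟪v, matVec S v⟫ := by
  rw [quad_eq hS, norm_sq_eq_sum hS, Finset.mul_sum]
  exact Finset.sum_le_sum fun i _ => mul_le_mul_of_nonneg_right (hc i) (sq_nonneg _)

lemma quad_upper {n : ℕ} {S : Matrix (Fin n) (Fin n) ℝ} (hS : S.IsHermitian)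
    {c : ℝ} (hc : ∀ i, hS.eigenvalues i ≤ c) (v : EuclideanSpace ℝ (Fin n)) :
    ⟪v, matVec S v⟫ ≤ c * ‖v‖ ^ 2 := by
  rw [quad_eq hS, norm_sq_eq_sum hS, Finset.mul_sum]
  exact Finset.sum_le_sum fun i _ => mul_le_mul_of_nonneg_right (hc i) (sq_nonneg _)

lemma norm_matVec_le {a b : ℕ} (M : Matrix (Fin a) (Fin b) ℝ) (v : EuclideanSpace ℝ (Fin b)) :
    ‖matVec M v‖ ≤ opNorm M * ‖v‖ := by
  simpa [matVec, opNorm] using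
    (LinearMap.toContinuousLinearMap (Matrix.toEuclideanLin M)).le_opNorm v

lemma gronwall_aux (V F : ℝ → ℝ) (α β : ℝ) (hα : 0 < α) (hβ : 0 ≤ β)
    (hd : ∀ t, 0 ≤ t → HasDerivAt V (F t) t)
    (hb : ∀ t, 0 ≤ t → F t ≤ -α * V t + β) :
    ∀ t, 0 ≤ t → V t ≤ Real.exp (-α * t) * V 0 + β / α := by
  set W : ℝ → ℝ := fun t => (V t - β / α) * Real.exp (α * t) with hW
  have hWd : ∀ t, 0 ≤ t →
      HasDerivAt W (F t * Real.exp (α * t) + (V t - β / α) * (Real.exp (α * t) * α)) t := by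
    intro t ht
    have h := ((hd t ht).sub_const (β / α)).mul (((hasDerivAt_id t).const_mul α).exp)
    refine h.congr_deriv ?_
    simp
  have hmono : AntitoneOn W (Set.Ici 0) := by
    apply antitoneOn_of_deriv_nonpos (convex_Ici 0)
    · intro t ht
      exact (hWd t ht).continuousAt.continuousWithinAt
    · rw [interior_Ici]
      intro t ht
      exact (hWd t ht.le).differentiableAt.differentiableWithinAt
    · rw [interior_Ici]
      intro t ht
      rw [(hWd t ht.le).deriv]
      have h1 := hb t ht.le
      have he := Real.exp_pos (α * t)
      have hba : α * (β / α) = β := by field_simp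
      nlinarith [mul_le_mul_of_nonneg_right h1 he.le]
  intro t ht
  have hWt : W t ≤ W 0 := hmono Set.self_mem_Ici ht ht
  have hW0 : W 0 = V 0 - β / α := by simp [hW]
  have hineq : (V t - β / α) * Real.exp (α * t) ≤ V 0 - β / α := by rw [← hW0]; exact hWt
  have hβα : 0 ≤ β / α := div_nonneg hβ hα.le
  have h2 : V t - β / α ≤ (V 0 - β / α) * Real.exp (-α * t) := by
    have h3 := mul_le_mul_of_nonneg_right hineq (Real.exp_pos (-α * t)).le
    calc V t - β / α = (V t - β / α) * (Real.exp (α * t) * Real.exp (-α * t)) := by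
          rw [← Real.exp_add]; ring_nf; simp
      _ = (V t - β / α) * Real.exp (α * t) * Real.exp (-α * t) := by ring
      _ ≤ (V 0 - β / α) * Real.exp (-α * t) := h3
  nlinarith [mul_nonneg hβα (Real.exp_pos (-α * t)).le]
set_option maxHeartbeats 1000000 in
/-- ISS bound of Theorem 1: if `x' = A x + B e` with `Aᵀ P + P A = -Q`, `P, Q ≻ 0`,
and `‖e(t)‖ ≤ E` for all `t ≥ 0`, then
`‖x(t)‖² ≤ (λ_max(P)/λ_min(P)) exp(-λ_min(Q) t/(2 λ_max(P))) ‖x(0)‖²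
  + (4 λ_max(P) ‖BᵀPᵀPB‖/(λ_min(P) λ_min(Q)²)) E²`,
i.e. the system is input-to-state stable with respect to `e`. -/
theorem event_triggered_iss_bound {N m : ℕ}
    (A P Q : Matrix (Fin N) (Fin N) ℝ) (B : Matrix (Fin N) (Fin m) ℝ)
    (hP : P.PosDef) (hQ : Q.PosDef)
    (hLyap : Aᵀ * P + P * A = -Q)
    (lamQ : ℝ) (hlamQ : IsLeast (Set.range hQ.1.eigenvalues) lamQ)
    (lamPmin : ℝ) (hlamPmin : IsLeast (Set.range hP.1.eigenvalues) lamPmin)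
    (lamPmax : ℝ) (hlamPmax : IsGreatest (Set.range hP.1.eigenvalues) lamPmax)
    (x : ℝ → EuclideanSpace ℝ (Fin N)) (e : ℝ → EuclideanSpace ℝ (Fin m))
    (he : Continuous e)
    (hx : ∀ t, 0 ≤ t → HasDerivAt x (matVec A (x t) + matVec B (e t)) t)
    (E : ℝ) (hE : 0 ≤ E) (heE : ∀ t, 0 ≤ t → ‖e t‖ ≤ E) :
    ∀ t, 0 ≤ t →
      ‖x t‖ ^ 2 ≤ (lamPmax / lamPmin) * Real.exp (-lamQ * t / (2 * lamPmax)) * ‖x 0‖ ^ 2 +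
        (4 * lamPmax * opNorm (Bᵀ * Pᵀ * P * B) / (lamPmin * lamQ ^ 2)) * E ^ 2 := by
  -- positivity of eigenvalue bounds
  obtain ⟨iQ, hiQ⟩ := hlamQ.1
  have hlamQ0 : 0 < lamQ := hiQ ▸ hQ.eigenvalues_pos iQ
  obtain ⟨iPm, hiPm⟩ := hlamPmin.1
  have hlamPmin0 : 0 < lamPmin := hiPm ▸ hP.eigenvalues_pos iPm
  obtain ⟨iPM, hiPM⟩ := hlamPmax.1
  have hlamPmax0 : 0 < lamPmax := hiPM ▸ hP.eigenvalues_pos iPM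
  have hPT : Pᵀ = P := by
    have := hP.1.eq
    rwa [Matrix.conjTranspose_eq_transpose_of_trivial] at this
  set c := opNorm (Bᵀ * Pᵀ * P * B) with hc
  have hc0 : 0 ≤ c := norm_nonneg _
  set V : ℝ → ℝ := fun t => ⟪x t, matVec P (x t)⟫ with hVdef
  set F : ℝ → ℝ := fun t =>
    -⟪x t, matVec Q (x t)⟫ + 2 * ⟪x t, matVec (P * B) (e t)⟫ with hFdef
  set α : ℝ := lamQ / (2 * lamPmax) with hαdef
  set β : ℝ := 2 * c / lamQ * E ^ 2 with hβdef
  have hα0 : 0 < α := by positivity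
  have hβ0 : 0 ≤ β := by positivity
  -- derivative of V
  have hVd : ∀ t, 0 ≤ t → HasDerivAt V (F t) t := by
    intro t ht
    have hxt := hx t ht
    have hPx : HasDerivAt (fun s => matVec P (x s))
        (matVec P (matVec A (x t) + matVec B (e t))) t := by
      have h := ((Matrix.toEuclideanLin P).toContinuousLinearMap).hasFDerivAt.comp_hasDerivAt t hxt
      exact h
    have h := hxt.inner ℝ hPx
    refine h.congr_deriv (Eq.symm ?_)
    -- algebra for the derivative value
    have e1 : matVec P (matVec A (x t) + matVec B (e t))
        = matVec (P * A) (x t) + matVec (P * B) (e t) := by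
      rw [matVec_add_vec, ← matVec_mul, ← matVec_mul]
    have e2 : ⟪matVec A (x t) + matVec B (e t), matVec P (x t)⟫
        = ⟪x t, matVec (Aᵀ * P) (x t)⟫ + ⟪x t, matVec (P * B) (e t)⟫ := by
      rw [inner_add_left, inner_matVec_left, ← matVec_mul]
      congr 1
      rw [real_inner_comm, inner_matVec_left, hPT, ← matVec_mul]
    have e3 : ⟪x t, matVec P (matVec A (x t) + matVec B (e t))⟫
        = ⟪x t, matVec (P * A) (x t)⟫ + ⟪x t, matVec (P * B) (e t)⟫ := by
      rw [e1, inner_add_right]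
    have e4 : ⟪x t, matVec (Aᵀ * P) (x t)⟫ + ⟪x t, matVec (P * A) (x t)⟫
        = -⟪x t, matVec Q (x t)⟫ := by
      rw [← inner_add_right, ← matVec_add_mat, hLyap, matVec_neg_mat, inner_neg_right]
    rw [e3, e2]
    show -⟪x t, matVec Q (x t)⟫ + 2 * ⟪x t, matVec (P * B) (e t)⟫ =
      ⟪x t, matVec (P * A) (x t)⟫ + ⟪x t, matVec (P * B) (e t)⟫ +
        (⟪x t, matVec (Aᵀ * P) (x t)⟫ + ⟪x t, matVec (P * B) (e t)⟫)
    linarith [e4]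
  -- differential inequality
  have hVb : ∀ t, 0 ≤ t → F t ≤ -α * V t + β := by
    intro t ht
    set v := x t with hv
    set u := matVec (P * B) (e t) with hu
    have h1 : lamQ * ‖v‖ ^ 2 ≤ ⟪v, matVec Q v⟫ :=
      quad_lower hQ.1 (fun i => hlamQ.2 ⟨i, rfl⟩) v
    have h2 : ⟪v, u⟫ ≤ ‖v‖ * ‖u‖ := real_inner_le_norm v u
    have h3 : ‖u‖ ^ 2 ≤ c * E ^ 2 := by
      have hmat : (P * B)ᵀ * (P * B) = Bᵀ * Pᵀ * P * B := by
        rw [Matrix.transpose_mul]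
        simp [Matrix.mul_assoc]
      have ha : ⟪u, u⟫ = ⟪e t, matVec (Bᵀ * Pᵀ * P * B) (e t)⟫ := by
        rw [hu, inner_matVec_left, ← matVec_mul, hmat]
      have hb : ⟪e t, matVec (Bᵀ * Pᵀ * P * B) (e t)⟫ ≤ ‖e t‖ * ‖matVec (Bᵀ * Pᵀ * P * B) (e t)‖ :=
        real_inner_le_norm _ _
      have hcb := norm_matVec_le (Bᵀ * Pᵀ * P * B) (e t)
      have hee := heE t ht
      have hen : (0:ℝ) ≤ ‖e t‖ := norm_nonneg _
      rw [← hc] at hcb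
      have k1 : ‖e t‖ * ‖matVec (Bᵀ * Pᵀ * P * B) (e t)‖ ≤ ‖e t‖ * (c * ‖e t‖) :=
        mul_le_mul_of_nonneg_left hcb hen
      have k2 : ‖e t‖ * ‖e t‖ ≤ E * E := mul_le_mul hee hee hen hE
      have hsq : ‖u‖ ^ 2 = ⟪u, u⟫ := (real_inner_self_eq_norm_sq u).symm
      nlinarith [k1, k2, hc0, hb, ha, hsq]
    have h4 : V t ≤ lamPmax * ‖v‖ ^ 2 :=
      quad_upper hP.1 (fun i => hlamPmax.2 ⟨i, rfl⟩) v
    have h5 : α * V t ≤ lamQ / 2 * ‖v‖ ^ 2 := by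
      rw [hαdef, div_mul_eq_mul_div, div_le_iff₀ (by positivity : (0:ℝ) < 2 * lamPmax)]
      nlinarith [h4, hlamQ0]
    have h6 : 2 * (‖v‖ * ‖u‖) ≤ lamQ / 2 * ‖v‖ ^ 2 + 2 / lamQ * ‖u‖ ^ 2 := by
      have hkey : lamQ / 2 * ‖v‖ ^ 2 + 2 / lamQ * ‖u‖ ^ 2 - 2 * (‖v‖ * ‖u‖)
          = (lamQ * ‖v‖ - 2 * ‖u‖) ^ 2 / (2 * lamQ) := by
        field_simp
        ring
      have hnn : (0:ℝ) ≤ (lamQ * ‖v‖ - 2 * ‖u‖) ^ 2 / (2 * lamQ) :=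
        div_nonneg (sq_nonneg _) (by positivity)
      linarith [hkey, hnn]
    have h7 : 2 / lamQ * ‖u‖ ^ 2 ≤ β := by
      rw [hβdef]
      have := mul_le_mul_of_nonneg_left h3 (le_of_lt (by positivity : (0:ℝ) < 2 / lamQ))
      calc 2 / lamQ * ‖u‖ ^ 2 ≤ 2 / lamQ * (c * E ^ 2) := this
        _ = 2 * c / lamQ * E ^ 2 := by ring
    show -⟪v, matVec Q v⟫ + 2 * ⟪v, matVec (P * B) (e t)⟫ ≤ -α * V t + β
    linarith
  -- Gronwall
  have hgron := gronwall_aux V F α β hα0 hβ0 hVd hVb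
  intro t ht
  have hVt := hgron t ht
  have hlow : lamPmin * ‖x t‖ ^ 2 ≤ V t :=
    quad_lower hP.1 (fun i => hlamPmin.2 ⟨i, rfl⟩) (x t)
  have hup : V 0 ≤ lamPmax * ‖x 0‖ ^ 2 :=
    quad_upper hP.1 (fun i => hlamPmax.2 ⟨i, rfl⟩) (x 0)
  have hexp : Real.exp (-α * t) = Real.exp (-lamQ * t / (2 * lamPmax)) := by
    congr 1
    rw [hαdef]
    ring
  have hβα : β / α = 4 * lamPmax * c / lamQ ^ 2 * E ^ 2 := by
    rw [hβdef, hαdef]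
    field_simp
    ring
  have hep := Real.exp_pos (-lamQ * t / (2 * lamPmax))
  rw [hexp, hβα] at hVt
  -- conclude by dividing by lamPmin
  rw [← mul_le_mul_iff_right₀ hlamPmin0]
  have hrhs : lamPmin * ((lamPmax / lamPmin) * Real.exp (-lamQ * t / (2 * lamPmax)) * ‖x 0‖ ^ 2 +
      (4 * lamPmax * c / (lamPmin * lamQ ^ 2)) * E ^ 2)
      = lamPmax * Real.exp (-lamQ * t / (2 * lamPmax)) * ‖x 0‖ ^ 2 +
        (4 * lamPmax * c / lamQ ^ 2) * E ^ 2 := by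
    field_simp
  rw [hrhs]
  nlinarith [mul_le_mul_of_nonneg_left hup hep.le]
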